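/- Let w = p₁p₂⋯pₘ = q₁q₂⋯q_s be two minimal r-factorisations of a word w ∈ E⁺, with coordinates (1, α₂, …, αₘ) and (1, β₂, …, β_s) respectively. Suppose for each factor a seed has been fixed: a seed eᵢ of pᵢ at position γᵢ in w (1 ≤ i ≤ m) and a seed fⱼ of qⱼ at position δⱼ in w (1 ≤ j ≤ s), so that 1 ≤ γ₁ < α₂ ≤ γ₂ < ⋯ < αₘ ≤ γₘ ≤ |w| and 1 ≤ δ₁ < β₂ ≤ δ₂ < ⋯ < β_s ≤ δ_s ≤ |w|. Then m = s, p̄ᵢ 𝓓 q̄ᵢ in IG(E) for all 1 ≤ i ≤ m, and the positions interlace: max(γᵢ, δᵢ) < min(αᵢ₊₁, βᵢ₊₁) and max(αᵢ₊₁, βᵢ₊₁) ≤ min(γᵢ₊₁, δᵢ₊₁) for all 1 ≤ i < m. Moreover p̄₁ 𝓡 q̄₁ and p̄ₘ 𝓛 q̄ₘ. -/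

import Mathlib

section Green

variable {T : Type*} [Semigroup T]

/-- Green's relation 𝓡. -/
def GreenR (a b : T) : Prop := a = b ∨ ∃ x y : T, a * x = b ∧ b * y = a

/-- Green's relation 𝓛. -/
def GreenL (a b : T) : Prop := a = b ∨ ∃ x y : T, x * a = b ∧ y * b = a

/-- Green's relation 𝓓 = 𝓡 ∘ 𝓛. -/
def GreenD (a b : T) : Prop := ∃ c : T, GreenR a c ∧ GreenL c b

/-- An element is regular if `a = a * b * a` for some `b`. -/
def IsRegularElem (a : T) : Prop := ∃ b : T, a * b * a = a

/-- The principal two-sided ideal `T¹ a T¹`. -/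
def principalIdeal (a : T) : Set T :=
  {x | x = a ∨ (∃ u, u * a = x) ∨ (∃ v, a * v = x) ∨ ∃ u v, u * a * v = x}

/-- Green's relation 𝓙. -/
def GreenJ (a b : T) : Prop := principalIdeal a = principalIdeal b

/-- The 𝓙-preorder. -/
def JleRel (a b : T) : Prop := principalIdeal a ⊆ principalIdeal b

/-- Strict 𝓙-order. -/
def JltRel (a b : T) : Prop := JleRel a b ∧ ¬ JleRel b a

/-- `u` is a (two-sided) identity element. -/
def IsIdentityElem (u : T) : Prop := ∀ x : T, u * x = x ∧ x * u = x

/-- The relation 𝓡̃. -/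
def RTilde (a b : T) : Prop := ∀ ε : T, ε * ε = ε → (ε * a = a ↔ ε * b = b)

/-- The relation 𝓛̃. -/
def LTilde (a b : T) : Prop := ∀ ε : T, ε * ε = ε → (a * ε = a ↔ b * ε = b)

/-- `blockProd p i k = p i * p (i+1) * ⋯ * p (i+k)`. -/
def blockProd (p : ℕ → T) (i : ℕ) : ℕ → T
  | 0 => p i
  | k + 1 => blockProd p i k * p (i + (k + 1))

/-- Multiply `x` by optional (possibly empty) words on both sides. -/
def withCtx (u : Option T) (x : T) (v : Option T) : T :=
  match u, v with
  | none, none => x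
  | some u', none => u' * x
  | none, some v' => x * v'
  | some u', some v' => u' * x * v'

/-- Multiply by an optional word on the left. -/
def leftCtx (u : Option T) (x : T) : T := match u with | none => x | some u' => u' * x

/-- Multiply by an optional word on the right. -/
def rightCtx (x : T) (v : Option T) : T := match v with | none => x | some v' => x * v'

end Green

section IGdef

/-- The set of idempotents of `S`. -/
abbrev IdemE (S : Type*) [Semigroup S] : Type _ := {x : S // x * x = x}

variable {S : Type*} [Semigroup S]

/-- `e, f` form a basic pair if `{e,f} ∩ {ef,fe} ≠ ∅`. -/
def BasicPair (e f : IdemE S) : Prop :=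
  (e : S) * f = e ∨ (e : S) * f = f ∨ (f : S) * e = e ∨ (f : S) * e = f

/-- The defining relations of IG(E): `ef = g` whenever `e, f` is a basic pair with
product `g` in `S`. -/
def igRelBase (u v : FreeSemigroup (IdemE S)) : Prop :=
  ∃ e f g : IdemE S, BasicPair e f ∧ (g : S) = (e : S) * (f : S) ∧
    u = FreeSemigroup.of e * FreeSemigroup.of f ∧ v = FreeSemigroup.of g

/-- The congruence on the free semigroup `E⁺` generated by the defining relations. -/
def igCon (S : Type*) [Semigroup S] : Con (FreeSemigroup (IdemE S)) :=
  conGen (fun u v => igRelBase u v)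

/-- The free idempotent generated semigroup IG(E). -/
abbrev IG (S : Type*) [Semigroup S] := (igCon S).Quotient

/-- `w̄`, the image of a word `w ∈ E⁺` in IG(E). -/
def igBar (w : FreeSemigroup (IdemE S)) : IG S := (w : (igCon S).Quotient)

/-- The list of letters of a word. -/
def wordList (w : FreeSemigroup (IdemE S)) : List (IdemE S) := w.head :: w.tail

/-- The length of a word. -/
def wlen (w : FreeSemigroup (IdemE S)) : ℕ := (wordList w).length

/-- Length of an optional word. -/
def olen (u : Option (FreeSemigroup (IdemE S))) : ℕ :=
  match u with | none => 0 | some u' => wlen u'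

/-- `p 1, …, p m` is an r-factorisation of `w`: each factor represents a regular
element of IG(E). -/
def IsRFact (w : FreeSemigroup (IdemE S)) (m : ℕ) (p : ℕ → FreeSemigroup (IdemE S)) : Prop :=
  1 ≤ m ∧ blockProd p 1 (m - 1) = w ∧ ∀ i, 1 ≤ i → i ≤ m → IsRegularElem (igBar (p i))

/-- A minimal r-factorisation: no product of two or more consecutive factors is regular. -/
def IsMinRFact (w : FreeSemigroup (IdemE S)) (m : ℕ) (p : ℕ → FreeSemigroup (IdemE S)) : Prop :=
  IsRFact w m p ∧
    ∀ i j, 1 ≤ i → i < j → j ≤ m → ¬ IsRegularElem (igBar (blockProd p i (j - i)))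

/-- The relation ≈ on m-tuples of words. -/
def TupleApprox (m : ℕ) (p q : ℕ → FreeSemigroup (IdemE S)) : Prop :=
  (∃ i, 1 ≤ i ∧ i ≤ m ∧ igBar (p i) = igBar (q i) ∧
    ∀ j, 1 ≤ j → j ≤ m → j ≠ i → p j = q j) ∨
  (∃ i, ∃ e : IdemE S, 1 ≤ i ∧ i < m ∧
    igBar (p i) = igBar (q i * FreeSemigroup.of e) ∧
    igBar (q (i + 1)) = igBar (FreeSemigroup.of e * p (i + 1)) ∧
    ∀ j, 1 ≤ j → j ≤ m → j ≠ i → j ≠ i + 1 → p j = q j) ∨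
  (∃ i, ∃ e : IdemE S, 1 ≤ i ∧ i < m ∧
    igBar (q i) = igBar (p i * FreeSemigroup.of e) ∧
    igBar (p (i + 1)) = igBar (FreeSemigroup.of e * q (i + 1)) ∧
    ∀ j, 1 ≤ j → j ≤ m → j ≠ i → j ≠ i + 1 → p j = q j)

/-- The relation ∼: the transitive closure of ≈. -/
def TupleSim (m : ℕ) (p q : ℕ → FreeSemigroup (IdemE S)) : Prop :=
  Relation.TransGen (TupleApprox m) p q

/-- One application of a defining relation of IG(E) inside a word. -/
def RewriteStep (w w' : FreeSemigroup (IdemE S)) : Prop :=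
  ∃ (u v : Option (FreeSemigroup (IdemE S))) (x y : FreeSemigroup (IdemE S)),
    (igRelBase x y ∨ igRelBase y x) ∧ w = withCtx u x v ∧ w' = withCtx u y v

/-- `e` is a seed of `w` at (1-based) position `k`. -/
def SeedAt (w : FreeSemigroup (IdemE S)) (e : IdemE S) (k : ℕ) : Prop :=
  ∃ u v : Option (FreeSemigroup (IdemE S)),
    w = withCtx u (FreeSemigroup.of e) v ∧ k = olen u + 1 ∧
    GreenL (igBar (leftCtx u (FreeSemigroup.of e))) (igBar (FreeSemigroup.of e)) ∧
    GreenR (igBar (FreeSemigroup.of e)) (igBar (rightCtx (FreeSemigroup.of e) v))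

/-- The coordinate (position within `w` of the first letter) of the `i`-th factor. -/
def wcoord (p : ℕ → FreeSemigroup (IdemE S)) (i : ℕ) : ℕ :=
  1 + ∑ j ∈ Finset.Ico 1 i, wlen (p j)

end IGdef


section GreenLemmas

variable {T : Type*} [Semigroup T]

lemma greenR_refl (a : T) : GreenR a a := Or.inl rfl

lemma greenR_symm {a b : T} (h : GreenR a b) : GreenR b a := by
  rcases h with h | ⟨x, y, h1, h2⟩
  · exact Or.inl h.symm
  · exact Or.inr ⟨y, x, h2, h1⟩

lemma greenR_trans {a b c : T} (h : GreenR a b) (h' : GreenR b c) : GreenR a c := by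
  rcases h with rfl | ⟨x, y, h1, h2⟩
  · exact h'
  rcases h' with rfl | ⟨x', y', h1', h2'⟩
  · exact Or.inr ⟨x, y, h1, h2⟩
  · exact Or.inr ⟨x * x', y' * y, by rw [← mul_assoc, h1, h1'], by rw [← mul_assoc, h2', h2]⟩

lemma greenL_refl (a : T) : GreenL a a := Or.inl rfl

lemma greenL_symm {a b : T} (h : GreenL a b) : GreenL b a := by
  rcases h with h | ⟨x, y, h1, h2⟩
  · exact Or.inl h.symm
  · exact Or.inr ⟨y, x, h2, h1⟩

lemma greenL_trans {a b c : T} (h : GreenL a b) (h' : GreenL b c) : GreenL a c := by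
  rcases h with rfl | ⟨x, y, h1, h2⟩
  · exact h'
  rcases h' with rfl | ⟨x', y', h1', h2'⟩
  · exact Or.inr ⟨x, y, h1, h2⟩
  · exact Or.inr ⟨x' * x, y * y', by rw [mul_assoc, h1, h1'], by rw [mul_assoc, h2', h2]⟩

lemma isRegular_of_greenR {a b : T} (h : GreenR a b) (hb : IsRegularElem b) : IsRegularElem a := by
  rcases h with rfl | ⟨x, y, h1, h2⟩
  · exact hb
  rcases hb with ⟨u, hu⟩
  refine ⟨x * u, ?_⟩
  calc a * (x * u) * a = b * u * a := by rw [← h1]; simp only [mul_assoc]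
    _ = b * u * b * y := by rw [mul_assoc (b*u), h2]
    _ = a := by rw [hu, h2]

lemma isRegular_of_greenL {a b : T} (h : GreenL a b) (hb : IsRegularElem b) : IsRegularElem a := by
  rcases h with rfl | ⟨x, y, h1, h2⟩
  · exact hb
  rcases hb with ⟨u, hu⟩
  refine ⟨u * x, ?_⟩
  calc a * (u * x) * a = a * u * (x * a) := by simp only [mul_assoc]
    _ = a * u * b := by rw [h1]
    _ = y * (b * u * b) := by rw [← h2]; simp only [mul_assoc]
    _ = a := by rw [hu, h2]

lemma greenR_idem_canon {e x : T} (he : e * e = e) (h : GreenR e x) :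
    e * x = x ∧ ∃ y, x * y = e := by
  rcases h with h | ⟨u, v, h1, h2⟩
  · exact ⟨by rw [← h]; exact he, e, by rw [← h]; exact he⟩
  · exact ⟨by rw [← h1, ← mul_assoc, he], v, h2⟩

lemma greenL_idem_canon {e x : T} (he : e * e = e) (h : GreenL x e) :
    x * e = x ∧ ∃ y, y * x = e := by
  rcases h with h | ⟨u, v, h1, h2⟩
  · exact ⟨by rw [h]; exact he, e, by rw [h]; exact he⟩
  · exact ⟨by rw [← h2, mul_assoc, he], u, h1⟩

lemma greenLR_comm {x c z : T} (h1 : GreenL x c) (h2 : GreenR c z) :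
    ∃ d, GreenR x d ∧ GreenL d z := by
  rcases h1 with rfl | ⟨x1, y1, hx1, hy1⟩
  · exact ⟨z, h2, greenL_refl z⟩
  rcases h2 with rfl | ⟨x2, y2, hx2, hy2⟩
  · exact ⟨x, greenR_refl x, Or.inr ⟨x1, y1, hx1, hy1⟩⟩
  refine ⟨x * x2, Or.inr ⟨x2, y2, rfl, ?_⟩, Or.inr ⟨x1, y1, ?_, ?_⟩⟩
  · rw [← hy1, mul_assoc, mul_assoc, ← mul_assoc c, hx2, hy2]
  · rw [← mul_assoc, hx1, hx2]
  · rw [← hx2, ← hy1, mul_assoc]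

lemma greenD_of_R {a b : T} (h : GreenR a b) : GreenD a b := ⟨b, h, greenL_refl b⟩

lemma greenD_of_L {a b : T} (h : GreenL a b) : GreenD a b := ⟨a, greenR_refl a, h⟩

lemma greenD_symm {a b : T} (h : GreenD a b) : GreenD b a := by
  rcases h with ⟨c, hr, hl⟩
  obtain ⟨d, h1, h2⟩ := greenLR_comm (greenL_symm hl) (greenR_symm hr)
  exact ⟨d, h1, h2⟩

lemma greenD_trans {a b c : T} (h : GreenD a b) (h' : GreenD b c) : GreenD a c := by
  rcases h with ⟨u, hru, hlu⟩
  rcases h' with ⟨v, hrv, hlv⟩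
  obtain ⟨d, h1, h2⟩ := greenLR_comm hlu hrv
  exact ⟨d, greenR_trans hru h1, greenL_trans h2 hlv⟩

end GreenLemmas

section FDsec

variable {T : Type*} [Semigroup T]

/-- Abstract data of a minimal r-factorisation with chosen seeds, in terms of a
"segment product" function `c` (half-open intervals of positions). -/
structure FD (c : ℕ → ℕ → T) (n : ℕ) : Type where
  m : ℕ
  a : ℕ → ℕ
  g : ℕ → ℕ
  hm : 1 ≤ m
  ha1 : a 1 = 1
  hmono : ∀ i, 1 ≤ i → i ≤ m → a i < a (i + 1)
  hatop : a (m + 1) = n + 1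
  hglo : ∀ i, 1 ≤ i → i ≤ m → a i ≤ g i
  hghi : ∀ i, 1 ≤ i → i ≤ m → g i < a (i + 1)
  hidem : ∀ i, 1 ≤ i → i ≤ m → c (g i) (g i + 1) * c (g i) (g i + 1) = c (g i) (g i + 1)
  hSL : ∀ i, 1 ≤ i → i ≤ m → GreenL (c (a i) (g i + 1)) (c (g i) (g i + 1))
  hSR : ∀ i, 1 ≤ i → i ≤ m → GreenR (c (g i) (g i + 1)) (c (g i) (a (i + 1)))
  hmin : ∀ i i', 1 ≤ i → i < i' → i' ≤ m → ¬ IsRegularElem (c (a i) (a (i' + 1)))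

variable {c : ℕ → ℕ → T} {n : ℕ}

namespace FD

lemma amono (P : FD c n) : ∀ i i', 1 ≤ i → i ≤ i' → i' ≤ P.m + 1 → P.a i ≤ P.a i' := by
  intro i i'
  induction i' with
  | zero => intro h1 h2 h3; omega
  | succ k ih =>
    intro h1 h2 h3
    rcases Nat.lt_or_ge i (k+1) with h | h
    · have hik : i ≤ k := by omega
      have h1k : 1 ≤ k := le_trans h1 hik
      have e1 := P.hmono k h1k (by omega)
      have e2 := ih h1 hik (by omega)
      omega
    · have hik : i = k + 1 := by omega
      rw [hik]

lemma gpos (P : FD c n) {i : ℕ} (h1 : 1 ≤ i) (h2 : i ≤ P.m) : 1 ≤ P.g i := by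
  have := P.hglo i h1 h2
  have hP := P.ha1
  have := P.amono 1 i le_rfl h1 (by omega)
  omega

lemma glen (P : FD c n) {i : ℕ} (h1 : 1 ≤ i) (h2 : i ≤ P.m) : P.g i ≤ n := by
  have h3 := P.hghi i h1 h2
  have h4 := P.amono (i+1) (P.m+1) (by omega) (by omega) (le_refl _)
  have := P.hatop
  omega

lemma window (P : FD c n) (x : ℕ) (hx1 : 1 ≤ x) (hx2 : x ≤ n) :
    ∃ i, 1 ≤ i ∧ i ≤ P.m ∧ P.a i ≤ x ∧ x < P.a (i + 1) := by
  have main : ∀ d k, 1 ≤ k → k ≤ P.m → P.m - k ≤ d → P.a k ≤ x →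
      ∃ i, 1 ≤ i ∧ i ≤ P.m ∧ P.a i ≤ x ∧ x < P.a (i + 1) := by
    intro d
    induction d with
    | zero =>
      intro k h1 h2 h3 h4
      have hk : k = P.m := by omega
      refine ⟨k, h1, h2, h4, ?_⟩
      rw [hk, P.hatop]; omega
    | succ d ih =>
      intro k h1 h2 h3 h4
      rcases Nat.lt_or_ge x (P.a (k+1)) with h | h
      · exact ⟨k, h1, h2, h4, h⟩
      · have hkm : k < P.m := by
          by_contra hc'
          have hk : k = P.m := by omega
          rw [hk, P.hatop] at h; omega
        exact ih (k+1) (by omega) (by omega) (by omega) h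
  have := P.ha1
  exact main P.m 1 le_rfl P.hm (by omega) (by omega)

lemma windowMono (P : FD c n) {x i j : ℕ} (hi : x < P.a (i + 1)) (hj1 : 1 ≤ j) (hj2 : j ≤ P.m)
    (hjx : P.a j ≤ x) : j ≤ i := by
  by_contra hcon
  have : i + 1 ≤ j := by omega
  have := P.amono (i+1) j (by omega) this (by omega)
  omega

end FD

/-- `c` is a "segment product": concatenation of adjacent segments multiplies. -/
def CMul (c : ℕ → ℕ → T) : Prop := ∀ {x y z : ℕ}, x < y → y < z → c x y * c y z = c x z

namespace FD

/-- Left seed facts: for `a i ≤ aa ≤ g i`, the segment `[aa, g i]` maps onto the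
seed idempotent from the left, and absorbs it on the right. -/
lemma li (P : FD c n) (hc : CMul c) {i aa : ℕ} (h1 : 1 ≤ i) (h2 : i ≤ P.m)
    (hlo : P.a i ≤ aa) (hhi : aa ≤ P.g i) :
    (∃ x, x * c aa (P.g i + 1) = c (P.g i) (P.g i + 1)) ∧
      c aa (P.g i + 1) * c (P.g i) (P.g i + 1) = c aa (P.g i + 1) := by
  have he := P.hidem i h1 h2
  constructor
  · obtain ⟨-, x, hx⟩ := greenL_idem_canon he (P.hSL i h1 h2)
    rcases Nat.lt_or_ge (P.a i) aa with h | h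
    · refine ⟨x * c (P.a i) aa, ?_⟩
      rw [mul_assoc, hc h (by omega), hx]
    · have : aa = P.a i := by omega
      exact ⟨x, by rw [this, hx]⟩
  · rcases Nat.lt_or_ge aa (P.g i) with h | h
    · rw [← hc h (by omega), mul_assoc, he]
    · have : aa = P.g i := by omega
      rw [this, he]

/-- Right seed facts. -/
lemma ri (P : FD c n) (hc : CMul c) {i b : ℕ} (h1 : 1 ≤ i) (h2 : i ≤ P.m)
    (hlo : P.g i < b) (hhi : b ≤ P.a (i + 1)) :
    (∃ y, c (P.g i) b * y = c (P.g i) (P.g i + 1)) ∧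
      c (P.g i) (P.g i + 1) * c (P.g i) b = c (P.g i) b := by
  have he := P.hidem i h1 h2
  constructor
  · obtain ⟨-, y, hy⟩ := greenR_idem_canon he (P.hSR i h1 h2)
    rcases Nat.lt_or_ge b (P.a (i + 1)) with h | h
    · refine ⟨c b (P.a (i + 1)) * y, ?_⟩
      rw [← mul_assoc, hc hlo h, hy]
    · have : b = P.a (i + 1) := by omega
      exact ⟨y, by rw [this, hy]⟩
  · rcases Nat.lt_or_ge (P.g i + 1) b with h | h
    · rw [← hc (by omega : P.g i < P.g i + 1) h, ← mul_assoc, he]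
    · have : b = P.g i + 1 := by omega
      rw [this, he]

lemma stripL (P : FD c n) (hc : CMul c) {i aa b : ℕ} (h1 : 1 ≤ i) (h2 : i ≤ P.m)
    (hlo : P.a i ≤ aa) (hhi : aa ≤ P.g i) (hb : P.g i < b) :
    GreenL (c aa b) (c (P.g i) b) := by
  rcases Nat.lt_or_ge aa (P.g i) with h | h
  · obtain ⟨⟨x, hx⟩, -⟩ := P.li hc h1 h2 hlo hhi
    refine Or.inr ⟨x, c aa (P.g i), ?_, hc h hb⟩
    rcases Nat.lt_or_ge (P.g i + 1) b with h' | h'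
    · rw [← hc (by omega : aa < P.g i + 1) h', ← mul_assoc, hx,
        hc (by omega : P.g i < P.g i + 1) h']
    · have : b = P.g i + 1 := by omega
      rw [this, hx]
  · have : aa = P.g i := by omega
    rw [this]
    exact greenL_refl _

lemma stripR (P : FD c n) (hc : CMul c) {i aa b : ℕ} (h1 : 1 ≤ i) (h2 : i ≤ P.m)
    (ha : aa ≤ P.g i) (hb1 : P.g i < b) (hb2 : b ≤ P.a (i + 1)) :
    GreenR (c aa b) (c aa (P.g i + 1)) := by
  rcases Nat.lt_or_ge (P.g i + 1) b with h | h
  · obtain ⟨⟨y, hy⟩, -⟩ := P.ri hc h1 h2 hb1 hb2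
    refine Or.inr ⟨y, c (P.g i + 1) b, ?_, hc (by omega : aa < P.g i + 1) h⟩
    rcases Nat.lt_or_ge aa (P.g i) with h' | h'
    · rw [← hc h' hb1, mul_assoc, hy, hc h' (by omega : P.g i < P.g i + 1)]
    · have : aa = P.g i := by omega
      rw [this, hy]
  · have : b = P.g i + 1 := by omega
    rw [this]
    exact greenR_refl _

lemma regPair (P : FD c n) (hc : CMul c) {i aa b : ℕ} (h1 : 1 ≤ i) (h2 : i ≤ P.m)
    (halo : P.a i ≤ aa) (hahi : aa ≤ P.g i) (hblo : P.g i ≤ b) (hbhi : b < P.a (i + 1)) :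
    IsRegularElem (c aa (b + 1)) := by
  have hreg : IsRegularElem (c (P.g i) (b + 1)) := by
    obtain ⟨⟨y, hy⟩, habs⟩ := P.ri hc h1 h2 (by omega : P.g i < b + 1) (by omega)
    exact ⟨y, by rw [hy, habs]⟩
  exact isRegular_of_greenL (P.stripL hc h1 h2 halo hahi (by omega)) hreg

lemma negPair (P : FD c n) (hc : CMul c) {i i' aa b : ℕ} (h1 : 1 ≤ i) (hii : i < i') (h2 : i' ≤ P.m)
    (halo : P.a i ≤ aa) (hahi : aa ≤ P.g i) (hblo : P.g i' ≤ b) (hbhi : b < P.a (i' + 1)) :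
    ¬ IsRegularElem (c aa (b + 1)) := by
  intro hreg
  have hgg : P.g i < P.g i' := by
    have e1 := P.hghi i h1 (by omega)
    have e2 := P.amono (i + 1) i' (by omega) hii (by omega)
    have e3 := P.hglo i' (by omega) h2
    omega
  have hs1 : IsRegularElem (c (P.g i) (b + 1)) :=
    isRegular_of_greenL
      (greenL_symm (P.stripL hc h1 (by omega) halo hahi (by omega : P.g i < b + 1))) hreg
  have hs2 : GreenR (c (P.g i) (b + 1)) (c (P.g i) (P.a (i' + 1))) := by
    rcases Nat.lt_or_ge (b + 1) (P.a (i' + 1)) with h | h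
    · obtain ⟨⟨y, hy⟩, -⟩ := P.ri hc (by omega : 1 ≤ i') h2
        (by omega : P.g i' < P.a (i' + 1)) le_rfl
      have e1 : c (P.g i) (P.g i') * c (P.g i') (P.a (i' + 1)) = c (P.g i) (P.a (i' + 1)) :=
        hc hgg (by omega)
      have e2 : c (P.g i) (P.a (i' + 1)) * y = c (P.g i) (P.g i' + 1) := by
        rw [← e1, mul_assoc, hy, hc hgg (by omega)]
      have key : ∃ w, c (P.g i) (P.a (i' + 1)) * w = c (P.g i) (b + 1) := by
        rcases Nat.lt_or_ge (P.g i') b with h' | h'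
        · refine ⟨y * c (P.g i' + 1) (b + 1), ?_⟩
          rw [← mul_assoc, e2, hc (by omega : P.g i < P.g i' + 1) (by omega)]
        · have hb' : b = P.g i' := by omega
          subst hb'
          exact ⟨y, e2⟩
      obtain ⟨w, hw⟩ := key
      exact Or.inr ⟨c (b + 1) (P.a (i' + 1)), w, hc (by omega : P.g i < b + 1) h, hw⟩
    · have hb1 : b + 1 = P.a (i' + 1) := by omega
      rw [hb1]
      exact greenR_refl _
  have hs3 : IsRegularElem (c (P.g i) (P.a (i' + 1))) :=
    isRegular_of_greenR (greenR_symm hs2) hs1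
  have e4 := P.amono (i + 1) (i' + 1) (by omega) (by omega) (by omega)
  have e5 := P.hghi i h1 (by omega)
  have hs4 : IsRegularElem (c (P.a i) (P.a (i' + 1))) :=
    isRegular_of_greenL
      (P.stripL hc h1 (by omega) le_rfl (P.hglo i h1 (by omega)) (by omega)) hs3
  exact P.hmin i i' h1 hii h2 hs4

/-- The "zig-zag" lemma: there is no configuration
`γ_{i₀} ∈ preQ(j₀)`, `δ_{j₀} ∈ preP(i₁)` with `i₀ < i₁`. -/
lemma zig (P Q : FD c n) (hc : CMul c) :
    ∀ N i0 j0 i1, Q.m - j0 < N →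
      1 ≤ i0 → i0 ≤ P.m → 1 ≤ j0 → j0 ≤ Q.m → 1 ≤ i1 → i1 ≤ P.m → i0 < i1 →
      Q.a j0 ≤ P.g i0 → P.g i0 ≤ Q.g j0 →
      P.a i1 ≤ Q.g j0 → Q.g j0 ≤ P.g i1 → False := by
  intro N
  induction N with
  | zero => intro _ _ _ h; omega
  | succ N ih =>
    intro i0 j0 i1 hN hi01 hi02 hj01 hj02 hi11 hi12 hi0i1 hq1 hq2 hp1 hp2
    -- x = P.g i1, find its Q-window j1
    obtain ⟨j1, hj11, hj12, hj1lo, hj1hi⟩ :=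
      Q.window (P.g i1) (P.gpos hi11 hi12) (P.glen hi11 hi12)
    have hj0j1 : j0 ≤ j1 :=
      Q.windowMono hj1hi hj01 hj02 (le_trans hq1 (le_trans hq2 hp2))
    rcases Nat.eq_or_lt_of_le hj0j1 with hje | hjlt
    · -- P.g i1 lies in postQ j0 : contradiction with the two seeds γ_{i0}, γ_{i1}
      have hreg : IsRegularElem (c (P.g i0) (P.g i1 + 1)) :=
        Q.regPair hc hj01 hj02 hq1 hq2 hp2 (by rw [hje]; exact hj1hi)
      exact P.negPair hc hi01 hi0i1 hi12 (P.hglo i0 hi01 hi02) le_rfl le_rfl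
        (P.hghi i1 hi11 hi12) hreg
    · rcases Nat.lt_or_ge (P.g i1) (Q.g j1) with hpre | hpost
      · -- P.g i1 ∈ preQ j1 : look at y = Q.g j1 and its P-window i2
        obtain ⟨i2, hi21, hi22, hi2lo, hi2hi⟩ :=
          P.window (Q.g j1) (Q.gpos hj11 hj12) (Q.glen hj11 hj12)
        have hi1i2 : i1 ≤ i2 :=
          P.windowMono hi2hi hi11 hi12 (le_trans hp1 (le_trans hp2 (le_of_lt hpre)))
        rcases Nat.eq_or_lt_of_le hi1i2 with hie | hilt
        · -- Q.g j1 ∈ postP i1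
          have hreg : IsRegularElem (c (Q.g j0) (Q.g j1 + 1)) :=
            P.regPair hc hi11 hi12 hp1 hp2 (le_of_lt hpre)
              (by rw [hie]; exact hi2hi)
          exact Q.negPair hc hj01 hjlt hj12 (Q.hglo j0 hj01 hj02) le_rfl le_rfl
            (Q.hghi j1 hj11 hj12) hreg
        · rcases Nat.lt_or_ge (Q.g j1) (P.g i2) with hpre2 | hpost2
          · -- recurse
            exact ih i1 j1 i2 (by omega) hi11 hi12 hj11 hj12 hi21 hi22 hilt
              hj1lo (le_of_lt hpre) hi2lo (le_of_lt hpre2)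
          · -- Q.g j1 ∈ postP i2
            have hreg : IsRegularElem (c (P.g i1) (Q.g j1 + 1)) :=
              Q.regPair hc hj11 hj12 hj1lo (le_of_lt hpre) le_rfl
                (Q.hghi j1 hj11 hj12)
            exact P.negPair hc hi11 hilt hi22 (P.hglo i1 hi11 hi12) le_rfl hpost2
              hi2hi hreg
      · -- P.g i1 ∈ postQ j1 : contradiction via segment [δ_{j0}, γ_{i1}]
        have hreg : IsRegularElem (c (Q.g j0) (P.g i1 + 1)) :=
          P.regPair hc hi11 hi12 hp1 hp2 le_rfl (P.hghi i1 hi11 hi12)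
        exact Q.negPair hc hj01 hjlt hj12 (Q.hglo j0 hj01 hj02) le_rfl hpost
          hj1hi hreg


/-- Induction step for the first interlacing component. -/
lemma stepA (P Q : FD c n) (hc : CMul c) {i : ℕ} (h1 : 1 ≤ i)
    (hiP : i + 1 ≤ P.m) (hiQ : i + 1 ≤ Q.m)
    (hA : Q.a i ≤ P.g i) (hB : P.a i ≤ Q.g i)
    (hC : Q.g i < P.a (i + 1)) (hD : P.g i < Q.a (i + 1)) :
    Q.a (i + 1) ≤ P.g (i + 1) := by
  by_contra hcon
  push_neg at hcon
  have hg1 : P.g i < P.g (i + 1) := by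
    have := P.hghi i h1 (by omega)
    have := P.hglo (i + 1) (by omega) hiP
    omega
  rcases le_or_gt (P.g i) (Q.g i) with hle | hlt
  · have hreg : IsRegularElem (c (P.g i) (P.g (i + 1) + 1)) := by
      refine Q.regPair hc h1 (by omega) hA hle ?_ hcon
      have := P.hglo (i + 1) (by omega) hiP
      omega
    exact P.negPair hc h1 (by omega : i < i + 1) hiP (P.hglo i h1 (by omega)) le_rfl le_rfl
      (P.hghi (i + 1) (by omega) hiP) hreg
  · have hreg : IsRegularElem (c (Q.g i) (P.g (i + 1) + 1)) := by
      refine Q.regPair hc h1 (by omega) (Q.hglo i h1 (by omega)) le_rfl ?_ hcon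
      have := P.hglo (i + 1) (by omega) hiP
      omega
    exact P.negPair hc h1 (by omega : i < i + 1) hiP hB (le_of_lt hlt) le_rfl
      (P.hghi (i + 1) (by omega) hiP) hreg

/-- Step for the second interlacing component. -/
lemma stepC (P Q : FD c n) (hc : CMul c) {i : ℕ} (h1 : 1 ≤ i)
    (hiP : i < P.m) (hiQ : i ≤ Q.m) (hA : Q.a i ≤ P.g i) :
    Q.g i < P.a (i + 1) := by
  by_contra hcon
  push_neg at hcon
  have hpg : P.g i ≤ Q.g i := by
    have := P.hghi i h1 (by omega)
    omega
  obtain ⟨i1, hi11, hi12, hi1lo, hi1hi⟩ :=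
    P.window (Q.g i) (Q.gpos h1 hiQ) (Q.glen h1 hiQ)
  have hii1 : i + 1 ≤ i1 := P.windowMono hi1hi (by omega) hiP hcon
  rcases Nat.lt_or_ge (Q.g i) (P.g i1) with hpre | hpost
  · exact P.zig Q hc (Q.m + 1) i i i1 (by omega) h1 (by omega) h1 hiQ hi11 hi12 (by omega)
      hA hpg hi1lo (le_of_lt hpre)
  · have hreg : IsRegularElem (c (P.g i) (Q.g i + 1)) :=
      Q.regPair hc h1 hiQ hA hpg le_rfl (Q.hghi i h1 hiQ)
    exact P.negPair hc h1 (by omega : i < i1) hi12 (P.hglo i h1 (by omega)) le_rfl hpost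
      hi1hi hreg

/-- The interlacing invariant, by induction. -/
lemma inv (P Q : FD c n) (hc : CMul c) :
    ∀ i, 1 ≤ i → i ≤ P.m → i ≤ Q.m →
      Q.a i ≤ P.g i ∧ P.a i ≤ Q.g i ∧
        (i < P.m → Q.g i < P.a (i + 1)) ∧ (i < Q.m → P.g i < Q.a (i + 1)) := by
  intro i
  induction i with
  | zero => omega
  | succ k ih =>
    intro h1 hP hQ
    rcases Nat.eq_or_lt_of_le h1 with h0 | h0
    · -- k + 1 = 1
      have hk : k = 0 := by omega
      subst hk
      have hA : Q.a 1 ≤ P.g 1 := by rw [Q.ha1]; exact P.gpos le_rfl hP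
      have hB : P.a 1 ≤ Q.g 1 := by rw [P.ha1]; exact Q.gpos le_rfl hQ
      exact ⟨hA, hB, fun h => P.stepC Q hc le_rfl h hQ hA,
        fun h => Q.stepC P hc le_rfl h hP hB⟩
    · have hk1 : 1 ≤ k := by omega
      obtain ⟨hA, hB, hC, hD⟩ := ih hk1 (by omega) (by omega)
      have hA' : Q.a (k + 1) ≤ P.g (k + 1) :=
        P.stepA Q hc hk1 hP hQ hA hB (hC (by omega)) (hD (by omega))
      have hB' : P.a (k + 1) ≤ Q.g (k + 1) :=
        Q.stepA P hc hk1 hQ hP hB hA (hD (by omega)) (hC (by omega))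
      exact ⟨hA', hB', fun h => P.stepC Q hc (by omega) h hQ hA',
        fun h => Q.stepC P hc (by omega) h hP hB'⟩

/-- The numbers of factors agree. -/
lemma mle (P Q : FD c n) (hc : CMul c) : P.m ≤ Q.m := by
  by_contra hcon
  push_neg at hcon
  set m := Q.m with hm
  obtain ⟨hA, hB, hC, -⟩ := P.inv Q hc m Q.hm (le_of_lt hcon) le_rfl
  have hCm : Q.g m < P.a (m + 1) := hC hcon
  have hy1 : P.a (m + 1) ≤ P.g (m + 1) := P.hglo (m + 1) (by omega) hcon
  have hy2 : P.g (m + 1) < P.a (m + 2) := P.hghi (m + 1) (by omega) hcon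
  have hytop : P.g (m + 1) ≤ n := P.glen (by omega) hcon
  have hQtop := Q.hatop
  have hwin : P.g (m + 1) < Q.a (m + 1) := by rw [hQtop]; omega
  have hylo : Q.g m ≤ P.g (m + 1) := by omega
  rcases le_or_gt (P.g m) (Q.g m) with hle | hlt
  · have hreg : IsRegularElem (c (P.g m) (P.g (m + 1) + 1)) :=
      Q.regPair hc Q.hm le_rfl hA hle hylo hwin
    exact P.negPair hc Q.hm (by omega : m < m + 1) hcon (P.hglo m Q.hm (by omega)) le_rfl
      le_rfl hy2 hreg
  · have hreg : IsRegularElem (c (Q.g m) (P.g (m + 1) + 1)) :=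
      Q.regPair hc Q.hm le_rfl (Q.hglo m Q.hm le_rfl) le_rfl hylo hwin
    exact P.negPair hc Q.hm (by omega : m < m + 1) hcon hB (le_of_lt hlt) le_rfl hy2 hreg

lemma barR (P : FD c n) (hc : CMul c) {i : ℕ} (h1 : 1 ≤ i) (h2 : i ≤ P.m) :
    GreenR (c (P.a i) (P.a (i + 1))) (c (P.a i) (P.g i + 1)) :=
  P.stripR hc h1 h2 (P.hglo i h1 h2) (P.hghi i h1 h2) le_rfl

lemma barDseed (P : FD c n) (hc : CMul c) {i : ℕ} (h1 : 1 ≤ i) (h2 : i ≤ P.m) :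
    GreenD (c (P.a i) (P.a (i + 1))) (c (P.g i) (P.g i + 1)) :=
  ⟨c (P.a i) (P.g i + 1), P.barR hc h1 h2, P.hSL i h1 h2⟩

lemma seedDseed (P Q : FD c n) (hc : CMul c) {i : ℕ} (h1 : 1 ≤ i)
    (hP : i ≤ P.m) (hQ : i ≤ Q.m)
    (hA : Q.a i ≤ P.g i) (hB : P.a i ≤ Q.g i)
    (hCf : Q.g i < P.a (i + 1)) (hDf : P.g i < Q.a (i + 1)) :
    GreenD (c (P.g i) (P.g i + 1)) (c (Q.g i) (Q.g i + 1)) := by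
  rcases lt_trichotomy (P.g i) (Q.g i) with hgd | heq | hgd
  · refine ⟨c (P.g i) (Q.g i + 1), ?_, ?_⟩
    · obtain ⟨⟨y, hy⟩, -⟩ := P.ri hc h1 hP (by omega : P.g i < Q.g i + 1) (by omega)
      exact Or.inr ⟨c (P.g i + 1) (Q.g i + 1), y,
        hc (by omega : P.g i < P.g i + 1) (by omega), hy⟩
    · obtain ⟨⟨x, hx⟩, -⟩ := Q.li hc h1 hQ hA (le_of_lt hgd)
      exact Or.inr ⟨x, c (P.g i) (Q.g i), hx, hc hgd (by omega)⟩
  · rw [heq]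
    exact greenD_of_R (greenR_refl _)
  · refine greenD_symm ⟨c (Q.g i) (P.g i + 1), ?_, ?_⟩
    · obtain ⟨⟨y, hy⟩, -⟩ := Q.ri hc h1 hQ (by omega : Q.g i < P.g i + 1) (by omega)
      exact Or.inr ⟨c (Q.g i + 1) (P.g i + 1), y,
        hc (by omega : Q.g i < Q.g i + 1) (by omega), hy⟩
    · obtain ⟨⟨x, hx⟩, -⟩ := P.li hc h1 hP hB (le_of_lt hgd)
      exact Or.inr ⟨x, c (Q.g i) (P.g i), hx, hc hgd (by omega)⟩

lemma cfull (P Q : FD c n) (hc : CMul c) {i : ℕ} (h1 : 1 ≤ i) (hP : i ≤ P.m) (hQ : i ≤ Q.m)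
    (hms : P.m = Q.m) : Q.g i < P.a (i + 1) := by
  obtain ⟨hA, hB, hC, hD⟩ := P.inv Q hc i h1 hP hQ
  rcases lt_or_ge i P.m with h | h
  · exact hC h
  · have hgi := Q.glen h1 hQ
    have htop : P.a (i + 1) = n + 1 := by
      rw [show i = P.m by omega]
      exact P.hatop
    omega

lemma cmpR (P Q : FD c n) (hc : CMul c) (hgd : P.g 1 ≤ Q.g 1) (hdlt : Q.g 1 < P.a 2) :
    GreenR (c 1 (P.g 1 + 1)) (c 1 (Q.g 1 + 1)) := by
  have hg1 : 1 ≤ P.g 1 := P.gpos le_rfl P.hm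
  rcases Nat.eq_or_lt_of_le hgd with heq | hlt
  · rw [heq]
    exact greenR_refl _
  · obtain ⟨⟨y, hy⟩, -⟩ := P.ri hc le_rfl P.hm (by omega : P.g 1 < Q.g 1 + 1)
      (by rw [show (1:ℕ)+1 = 2 from rfl]; omega)
    refine Or.inr ⟨c (P.g 1 + 1) (Q.g 1 + 1), y, hc (by omega) (by omega), ?_⟩
    rcases Nat.eq_or_lt_of_le hg1 with he1 | he1
    · rw [← he1] at hy ⊢
      rw [hy]
    · rw [← hc he1 (by omega : P.g 1 < Q.g 1 + 1), mul_assoc, hy, hc he1 (by omega)]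

lemma firstR (P Q : FD c n) (hc : CMul c) (hms : P.m = Q.m) :
    GreenR (c (P.a 1) (P.a 2)) (c (Q.a 1) (Q.a 2)) := by
  have hQm : 1 ≤ Q.m := hms ▸ P.hm
  have hCf : Q.g 1 < P.a 2 := P.cfull Q hc le_rfl P.hm hQm hms
  have hDf : P.g 1 < Q.a 2 := Q.cfull P hc le_rfl hQm P.hm hms.symm
  have r1 := P.barR hc le_rfl P.hm
  have r2 := Q.barR hc le_rfl hQm
  rw [show (1:ℕ)+1 = 2 from rfl, P.ha1] at r1
  rw [show (1:ℕ)+1 = 2 from rfl, Q.ha1] at r2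
  rw [P.ha1, Q.ha1]
  rcases le_total (P.g 1) (Q.g 1) with h | h
  · exact greenR_trans (greenR_trans r1 (P.cmpR Q hc h hCf)) (greenR_symm r2)
  · exact greenR_trans (greenR_trans r1 (greenR_symm (Q.cmpR P hc h hDf))) (greenR_symm r2)

lemma cmpL (P Q : FD c n) (hc : CMul c) {k : ℕ} (h1 : 1 ≤ k) (hkQ : k ≤ Q.m)
    (hgd : P.g k ≤ Q.g k) (hA : Q.a k ≤ P.g k) :
    GreenL (c (P.g k) (n + 1)) (c (Q.g k) (n + 1)) := by
  have hdn : Q.g k ≤ n := Q.glen h1 hkQ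
  rcases Nat.eq_or_lt_of_le hgd with heq | hlt
  · rw [heq]
    exact greenL_refl _
  · obtain ⟨⟨x, hx⟩, -⟩ := Q.li hc h1 hkQ hA (le_of_lt hlt)
    refine Or.inr ⟨x, c (P.g k) (Q.g k), ?_, hc hlt (by omega)⟩
    rcases Nat.eq_or_lt_of_le hdn with hdn' | hdn'
    · rw [hdn'] at hx
      rw [hdn']
      exact hx
    · rw [← hc (by omega : P.g k < Q.g k + 1) (by omega : Q.g k + 1 < n + 1),
        ← mul_assoc, hx, hc (by omega : Q.g k < Q.g k + 1) (by omega)]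

lemma lastL (P Q : FD c n) (hc : CMul c) (hms : P.m = Q.m) :
    GreenL (c (P.a P.m) (P.a (P.m + 1))) (c (Q.a Q.m) (Q.a (Q.m + 1))) := by
  have hQm : 1 ≤ Q.m := hms ▸ P.hm
  obtain ⟨hA, hB, -, -⟩ := P.inv Q hc P.m P.hm le_rfl (le_of_eq hms)
  have hgn : P.g P.m ≤ n := P.glen P.hm le_rfl
  rw [← hms]
  have l1 : GreenL (c (P.a P.m) (P.a (P.m + 1))) (c (P.g P.m) (n + 1)) := by
    rw [P.hatop]
    exact P.stripL hc P.hm le_rfl le_rfl (P.hglo P.m P.hm le_rfl) (by omega)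
  have l2 : GreenL (c (Q.a P.m) (Q.a (P.m + 1))) (c (Q.g P.m) (n + 1)) := by
    rw [hms, Q.hatop]
    have hgn' : Q.g Q.m ≤ n := Q.glen hQm le_rfl
    exact Q.stripL hc hQm le_rfl le_rfl (Q.hglo Q.m hQm le_rfl) (by omega)
  rcases le_total (P.g P.m) (Q.g P.m) with h | h
  · have hk := P.cmpL Q hc (k := P.m) P.hm (le_of_eq hms) h hA
    exact greenL_trans (greenL_trans l1 hk) (greenL_symm l2)
  · have hk := Q.cmpL P hc (k := P.m) P.hm le_rfl h hB
    exact greenL_trans (greenL_trans l1 (greenL_symm hk)) (greenL_symm l2)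

/-- The abstract main theorem. -/
theorem main (P Q : FD c n) (hc : CMul c) :
    P.m = Q.m ∧
    (∀ i, 1 ≤ i → i ≤ P.m →
      GreenD (c (P.a i) (P.a (i + 1))) (c (Q.a i) (Q.a (i + 1)))) ∧
    (∀ i, 1 ≤ i → i < P.m →
      max (P.g i) (Q.g i) < min (P.a (i + 1)) (Q.a (i + 1)) ∧
      max (P.a (i + 1)) (Q.a (i + 1)) ≤ min (P.g (i + 1)) (Q.g (i + 1))) ∧
    GreenR (c (P.a 1) (P.a 2)) (c (Q.a 1) (Q.a 2)) ∧
    GreenL (c (P.a P.m) (P.a (P.m + 1))) (c (Q.a Q.m) (Q.a (Q.m + 1))) := by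
  have hms : P.m = Q.m := le_antisymm (P.mle Q hc) (Q.mle P hc)
  refine ⟨hms, ?_, ?_, P.firstR Q hc hms, P.lastL Q hc hms⟩
  · intro i h1 h2
    have hQ2 : i ≤ Q.m := hms ▸ h2
    obtain ⟨hA, hB, -, -⟩ := P.inv Q hc i h1 h2 hQ2
    have hCf : Q.g i < P.a (i + 1) := P.cfull Q hc h1 h2 hQ2 hms
    have hDf : P.g i < Q.a (i + 1) := Q.cfull P hc h1 hQ2 h2 hms.symm
    exact greenD_trans (greenD_trans (P.barDseed hc h1 h2)
      (P.seedDseed Q hc h1 h2 hQ2 hA hB hCf hDf))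
      (greenD_symm (Q.barDseed hc h1 hQ2))
  · intro i h1 h2
    have hQ2 : i ≤ Q.m := hms ▸ le_of_lt h2
    have hP1 : i + 1 ≤ P.m := h2
    have hQ1 : i + 1 ≤ Q.m := hms ▸ h2
    obtain ⟨hA, hB, hC, hD⟩ := P.inv Q hc i h1 (le_of_lt h2) hQ2
    obtain ⟨hA', hB', -, -⟩ := P.inv Q hc (i + 1) (by omega) hP1 hQ1
    have e1 := P.hghi i h1 (by omega)
    have e2 := Q.hghi i h1 hQ2
    have e3 := hC h2
    have e4 := hD (by omega)
    have e5 := P.hglo (i + 1) (by omega) hP1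
    have e6 := Q.hglo (i + 1) (by omega) hQ1
    omega


end FD

end FDsec

section Bridge

variable {S : Type*} [Semigroup S]

lemma igBar_mul (u v : FreeSemigroup (IdemE S)) : igBar (u * v) = igBar u * igBar v := by
  unfold igBar
  exact Con.coe_mul u v

/-- The single letter `e` as an element of IG(E). -/
def ofE (x : IdemE S) : IG S := igBar (FreeSemigroup.of x)

lemma ofE_idem (x : IdemE S) : ofE x * ofE x = ofE (S := S) x := by
  unfold ofE
  rw [← igBar_mul]
  unfold igBar
  refine (Con.eq _).mpr ?_
  refine ConGen.Rel.of _ _ ?_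
  exact ⟨x, x, x, Or.inl x.prop, x.prop.symm, rfl, rfl⟩

/-- Product of a nonempty list of letters in IG(E). -/
def lprod (h : IdemE S) (t : List (IdemE S)) : IG S :=
  t.foldl (fun x e => x * ofE e) (ofE h)

lemma lprod_foldl_mul (t : List (IdemE S)) :
    ∀ x y : IG S, t.foldl (fun a e => a * ofE e) (x * y) =
      x * t.foldl (fun a e => a * ofE e) y := by
  induction t with
  | nil => intro x y; rfl
  | cons a t ih =>
    intro x y
    show t.foldl _ (x * y * ofE a) = _
    rw [mul_assoc, ih]
    rfl

lemma lprod_eq (h : IdemE S) (t : List (IdemE S)) : lprod h t = igBar ⟨h, t⟩ := by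
  induction t generalizing h with
  | nil => rfl
  | cons a t ih =>
    show List.foldl _ (ofE h * ofE a) t = _
    rw [lprod_foldl_mul]
    have : (⟨h, a :: t⟩ : FreeSemigroup (IdemE S)) = FreeSemigroup.of h * ⟨a, t⟩ := rfl
    rw [this, igBar_mul, ← ih]
    rfl

lemma lprod_append (h : IdemE S) (t : List (IdemE S)) (h' : IdemE S) (t' : List (IdemE S)) :
    lprod h (t ++ h' :: t') = lprod h t * lprod h' t' := by
  rw [lprod_eq, lprod_eq, lprod_eq, ← igBar_mul, FreeSemigroup.mk_mul_mk]

lemma wordList_mk (h : IdemE S) (t : List (IdemE S)) :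
    wordList (⟨h, t⟩ : FreeSemigroup (IdemE S)) = h :: t := rfl

lemma wordList_mul (u v : FreeSemigroup (IdemE S)) :
    wordList (u * v) = wordList u ++ wordList v := by
  cases u; cases v; rfl

lemma wlen_mul (u v : FreeSemigroup (IdemE S)) : wlen (u * v) = wlen u + wlen v := by
  unfold wlen
  rw [wordList_mul, List.length_append]

lemma wlen_pos (u : FreeSemigroup (IdemE S)) : 1 ≤ wlen u := by
  cases u
  simp [wlen, wordList]

lemma wlen_of (x : IdemE S) : wlen (FreeSemigroup.of x) = 1 := rfl

variable (w : FreeSemigroup (IdemE S))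

/-- The letter of `w` at (1-based) position `k`. -/
def ell (k : ℕ) : IdemE S := (wordList w).getD (k - 1) w.head

/-- The product in IG(E) of the letters of `w` in positions `[a, b)`. -/
def cseg (a b : ℕ) : IG S := lprod (ell w a) ((List.range' (a + 1) (b - a - 1)).map (ell w))

lemma cseg_cmul : CMul (cseg w) := by
  intro x y z h1 h2
  unfold cseg
  obtain ⟨k, hk⟩ : ∃ k, z - y = k + 1 := ⟨z - y - 1, by omega⟩
  have e1 : y :: List.range' (y + 1) (z - y - 1) = List.range' y (z - y) := by
    rw [hk, Nat.add_sub_cancel, List.range'_succ]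
  have e2 : List.range' (x + 1) (y - x - 1) ++ List.range' y (z - y) =
      List.range' (x + 1) (z - x - 1) := by
    have h3 := List.range'_append (s := x + 1) (m := y - x - 1) (n := z - y) (step := 1)
    rw [show x + 1 + 1 * (y - x - 1) = y by omega,
      show y - x - 1 + (z - y) = z - x - 1 by omega] at h3
    exact h3
  rw [← e2, ← e1, List.map_append, List.map_cons, lprod_append]

/-- The word `u` occurs in `w` starting at position `a`. -/
def OccAt (u : FreeSemigroup (IdemE S)) (a : ℕ) : Prop :=
  wordList u = (List.range' a (wlen u)).map (ell w)

lemma occAt_bar {u : FreeSemigroup (IdemE S)} {a : ℕ} (h : OccAt w u a) :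
    igBar u = cseg w a (a + wlen u) := by
  obtain ⟨hd, tl⟩ := u
  unfold OccAt at h
  have hl : wlen (⟨hd, tl⟩ : FreeSemigroup (IdemE S)) = tl.length + 1 := rfl
  rw [wordList_mk, hl, List.range'_succ, List.map_cons] at h
  injection h with h1 h2
  unfold cseg
  rw [show a + wlen (⟨hd, tl⟩ : FreeSemigroup (IdemE S)) - a - 1 = tl.length by
    rw [hl]; omega]
  rw [← h1, ← h2, lprod_eq]

lemma occAt_mul {u v : FreeSemigroup (IdemE S)} {a : ℕ} :
    OccAt w (u * v) a ↔ OccAt w u a ∧ OccAt w v (a + wlen u) := by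
  unfold OccAt
  have hsplit : List.range' a (wlen (u * v)) =
      List.range' a (wlen u) ++ List.range' (a + wlen u) (wlen v) := by
    have h3 := List.range'_append (s := a) (m := wlen u) (n := wlen v) (step := 1)
    rw [show a + 1 * wlen u = a + wlen u by omega] at h3
    rw [wlen_mul, ← h3]
  rw [wordList_mul, hsplit, List.map_append]
  constructor
  · intro h
    exact List.append_inj h (by simp [wlen])
  · rintro ⟨h1, h2⟩
    rw [h1, h2]

lemma occAt_self : OccAt w w 1 := by
  unfold OccAt
  apply List.ext_getElem
  · simp [wlen]
  · intro i h1 h2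
    rw [List.getElem_map, List.getElem_range'_1]
    unfold ell
    rw [show 1 + i - 1 = i by omega]
    exact (List.getD_eq_getElem _ _ h1).symm

variable {p : ℕ → FreeSemigroup (IdemE S)}

lemma wlen_block (p : ℕ → FreeSemigroup (IdemE S)) (i k : ℕ) :
    wlen (blockProd p i k) = ∑ j ∈ Finset.Ico i (i + k + 1), wlen (p j) := by
  induction k with
  | zero =>
    show wlen (p i) = _
    rw [show i + 0 + 1 = i + 1 by omega, Finset.sum_Ico_succ_top le_rfl, Finset.Ico_self,
      Finset.sum_empty, zero_add]
  | succ k ih =>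
    show wlen (blockProd p i k * p (i + (k + 1))) = _
    rw [wlen_mul, ih, show i + (k + 1) + 1 = (i + k + 1) + 1 by omega,
      show i + (k + 1) = i + k + 1 by omega]
    exact (Finset.sum_Ico_succ_top (by omega) _).symm

lemma occAt_block {i k a : ℕ}
    (h : ∀ j, i ≤ j → j ≤ i + k → OccAt w (p j) (a + ∑ l ∈ Finset.Ico i j, wlen (p l))) :
    OccAt w (blockProd p i k) a := by
  induction k with
  | zero =>
    have := h i le_rfl (by omega)
    rw [Finset.Ico_self, Finset.sum_empty, add_zero] at this
    exact this
  | succ k ih =>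
    show OccAt w (blockProd p i k * p (i + (k + 1))) a
    rw [occAt_mul]
    constructor
    · exact ih (fun j hj1 hj2 => h j hj1 (by omega))
    · have := h (i + (k + 1)) (by omega) le_rfl
      rw [wlen_block, show i + (k + 1) = i + k + 1 by omega] at *
      exact this

lemma occAt_block_inv {i k a : ℕ} (h : OccAt w (blockProd p i k) a) :
    ∀ j, i ≤ j → j ≤ i + k → OccAt w (p j) (a + ∑ l ∈ Finset.Ico i j, wlen (p l)) := by
  induction k with
  | zero =>
    intro j hj1 hj2
    have hji : j = i := by omega
    subst hji
    rw [Finset.Ico_self, Finset.sum_empty, add_zero]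
    exact h
  | succ k ih =>
    intro j hj1 hj2
    have h' : OccAt w (blockProd p i k * p (i + (k + 1))) a := h
    rw [occAt_mul] at h'
    rcases Nat.lt_or_ge j (i + (k + 1)) with hj | hj
    · exact ih h'.1 j hj1 (by omega)
    · have hji : j = i + k + 1 := by omega
      subst hji
      have := h'.2
      rw [wlen_block] at this
      rw [show i + k + 1 = i + (k+1) by omega]
      exact this

lemma occAt_of_eq {u v : FreeSemigroup (IdemE S)} {a : ℕ} (h : u = v) (ho : OccAt w v a) :
    OccAt w u a := by rw [h]; exact ho

/-- Bridge between `SeedAt` and the abstract seed hypotheses on segments. -/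
lemma seed_bridge {pw : FreeSemigroup (IdemE S)} {e : IdemE S} {k aa g : ℕ}
    (hocc : OccAt w pw aa) (hs : SeedAt pw e k) (hg : g + 1 = aa + k) :
    aa ≤ g ∧ g < aa + wlen pw ∧
    cseg w g (g + 1) * cseg w g (g + 1) = cseg w g (g + 1) ∧
    GreenL (cseg w aa (g + 1)) (cseg w g (g + 1)) ∧
    GreenR (cseg w g (g + 1)) (cseg w g (aa + wlen pw)) := by
  obtain ⟨uo, vo, hdec, hk, hGL, hGR⟩ := hs
  cases uo with
  | none =>
    cases vo with
    | none =>
      simp only [withCtx] at hdec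
      simp only [olen] at hk
      simp only [leftCtx, rightCtx] at hGL hGR
      subst hdec
      have hgaa : g = aa := by omega
      subst hgaa
      have hofe : OccAt w (FreeSemigroup.of e) g := hocc
      have hbar : igBar (FreeSemigroup.of e) = cseg w g (g + 1) := by
        have h0 := occAt_bar w hofe
        rw [wlen_of] at h0
        exact h0
      have hlen : wlen (FreeSemigroup.of e) = 1 := wlen_of e
      refine ⟨le_rfl, by omega, ?_, ?_, ?_⟩
      · rw [← hbar]; exact ofE_idem e
      · rw [hbar] at hGL; exact hGL
      · rw [hbar] at hGR
        rw [hlen]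
        exact hGR
    | some v' =>
      simp only [withCtx] at hdec
      simp only [olen] at hk
      simp only [leftCtx, rightCtx] at hGL hGR
      subst hdec
      have hgaa : g = aa := by omega
      subst hgaa
      rw [occAt_mul] at hocc
      obtain ⟨h1, h2⟩ := hocc
      rw [wlen_of] at h2
      have hbar : igBar (FreeSemigroup.of e) = cseg w g (g + 1) := by
        have h0 := occAt_bar w h1
        rw [wlen_of] at h0
        exact h0
      have hbar2 : igBar (FreeSemigroup.of e * v') = cseg w g (g + wlen (FreeSemigroup.of e * v')) :=
        occAt_bar w (occAt_mul w |>.mpr ⟨h1, by rw [wlen_of]; exact h2⟩)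
      have hlen : wlen (FreeSemigroup.of e * v') = 1 + wlen v' := by rw [wlen_mul, wlen_of]
      have hv := wlen_pos v'
      refine ⟨le_rfl, by omega, ?_, ?_, ?_⟩
      · rw [← hbar]; exact ofE_idem e
      · rw [hbar] at hGL; exact hGL
      · rw [hbar, hbar2] at hGR; exact hGR
  | some u' =>
    have hu1 := wlen_pos u'
    cases vo with
    | none =>
      simp only [withCtx] at hdec
      simp only [olen] at hk
      simp only [leftCtx, rightCtx] at hGL hGR
      subst hdec
      have hgaa : g = aa + wlen u' := by omega
      subst hgaa
      rw [occAt_mul] at hocc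
      obtain ⟨h1, h2⟩ := hocc
      have hbar : igBar (FreeSemigroup.of e) = cseg w (aa + wlen u') (aa + wlen u' + 1) := by
        have h0 := occAt_bar w h2
        rw [wlen_of] at h0
        exact h0
      have hbar2 : igBar (u' * FreeSemigroup.of e) = cseg w aa (aa + wlen u' + 1) := by
        have h0 := occAt_bar w (show OccAt w (u' * FreeSemigroup.of e) aa by
          rw [occAt_mul]; exact ⟨h1, h2⟩)
        rw [wlen_mul, wlen_of, show aa + (wlen u' + 1) = aa + wlen u' + 1 by omega] at h0
        exact h0
      have hlen : wlen (u' * FreeSemigroup.of e) = wlen u' + 1 := by rw [wlen_mul, wlen_of]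
      refine ⟨by omega, by omega, ?_, ?_, ?_⟩
      · rw [← hbar]; exact ofE_idem e
      · rw [hbar, hbar2] at hGL; exact hGL
      · rw [hbar] at hGR
        rw [hlen, show aa + (wlen u' + 1) = aa + wlen u' + 1 by omega]
        exact hGR
    | some v' =>
      simp only [withCtx] at hdec
      simp only [olen] at hk
      simp only [leftCtx, rightCtx] at hGL hGR
      subst hdec
      have hgaa : g = aa + wlen u' := by omega
      subst hgaa
      rw [occAt_mul] at hocc
      obtain ⟨h12, h3⟩ := hocc
      rw [occAt_mul] at h12
      obtain ⟨h1, h2⟩ := h12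
      rw [wlen_mul, wlen_of, show aa + (wlen u' + 1) = aa + wlen u' + 1 by omega] at h3
      have hbar : igBar (FreeSemigroup.of e) = cseg w (aa + wlen u') (aa + wlen u' + 1) := by
        have h0 := occAt_bar w h2
        rw [wlen_of] at h0
        exact h0
      have hbar2 : igBar (u' * FreeSemigroup.of e) = cseg w aa (aa + wlen u' + 1) := by
        have h0 := occAt_bar w (show OccAt w (u' * FreeSemigroup.of e) aa by
          rw [occAt_mul]; exact ⟨h1, h2⟩)
        rw [wlen_mul, wlen_of, show aa + (wlen u' + 1) = aa + wlen u' + 1 by omega] at h0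
        exact h0
      have hbar3 : igBar (FreeSemigroup.of e * v') =
          cseg w (aa + wlen u') (aa + wlen u' + 1 + wlen v') := by
        have h0 := occAt_bar w (show OccAt w (FreeSemigroup.of e * v') (aa + wlen u') by
          rw [occAt_mul]
          refine ⟨h2, ?_⟩
          rw [wlen_of]
          exact h3)
        rw [wlen_mul, wlen_of,
          show aa + wlen u' + (1 + wlen v') = aa + wlen u' + 1 + wlen v' by omega] at h0
        exact h0
      have hlen : wlen (u' * FreeSemigroup.of e * v') = wlen u' + 1 + wlen v' := by
        rw [wlen_mul, wlen_mul, wlen_of]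
      have hv := wlen_pos v'
      refine ⟨by omega, by omega, ?_, ?_, ?_⟩
      · rw [← hbar]; exact ofE_idem e
      · rw [hbar, hbar2] at hGL; exact hGL
      · rw [hbar, hbar3] at hGR
        rw [hlen, show aa + (wlen u' + 1 + wlen v') = aa + wlen u' + 1 + wlen v' by omega]
        exact hGR

/-- Packaging a minimal r-factorisation with chosen seeds into the abstract data. -/
lemma mkFD {m : ℕ} {p : ℕ → FreeSemigroup (IdemE S)} {e : ℕ → IdemE S} {γ : ℕ → ℕ}
    (hp : IsMinRFact w m p)
    (hseedp : ∀ i, 1 ≤ i → i ≤ m →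
      ∃ k, SeedAt (p i) (e i) k ∧ γ i = wcoord p i - 1 + k) :
    ∃ P : FD (cseg w) (wlen w), P.m = m ∧ P.a = wcoord p ∧ P.g = γ ∧
      (∀ i, 1 ≤ i → i ≤ m → igBar (p i) = cseg w (wcoord p i) (wcoord p (i + 1))) := by
  obtain ⟨⟨hm1, hblock, hregs⟩, hmin⟩ := hp
  have hocw : OccAt w (blockProd p 1 (m - 1)) 1 := occAt_of_eq w hblock (occAt_self w)
  have hoccp : ∀ j, 1 ≤ j → j ≤ m → OccAt w (p j) (wcoord p j) := by
    intro j h1 h2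
    have h3 := occAt_block_inv w hocw j h1 (by omega : j ≤ 1 + (m - 1))
    unfold wcoord
    exact h3
  have hsucc : ∀ i, 1 ≤ i → wcoord p (i + 1) = wcoord p i + wlen (p i) := by
    intro i h1
    unfold wcoord
    rw [Finset.sum_Ico_succ_top h1]
    omega
  have hpos1 : ∀ i, 1 ≤ wcoord p i := by intro i; unfold wcoord; omega
  have htop : wcoord p (m + 1) = wlen w + 1 := by
    have hwlen : wlen w = ∑ l ∈ Finset.Ico 1 (m + 1), wlen (p l) := by
      rw [← hblock, wlen_block, show 1 + (m - 1) + 1 = m + 1 by omega]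
    unfold wcoord
    omega
  have hseeds : ∀ i, 1 ≤ i → i ≤ m →
      wcoord p i ≤ γ i ∧ γ i < wcoord p (i + 1) ∧
      cseg w (γ i) (γ i + 1) * cseg w (γ i) (γ i + 1) = cseg w (γ i) (γ i + 1) ∧
      GreenL (cseg w (wcoord p i) (γ i + 1)) (cseg w (γ i) (γ i + 1)) ∧
      GreenR (cseg w (γ i) (γ i + 1)) (cseg w (γ i) (wcoord p (i + 1))) := by
    intro i h1 h2
    obtain ⟨k, hs, hγ⟩ := hseedp i h1 h2
    have hk1 : 1 ≤ k := by
      obtain ⟨uo, vo, _, hk, _, _⟩ := hs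
      omega
    have hg : γ i + 1 = wcoord p i + k := by
      have := hpos1 i
      omega
    obtain ⟨b1, b2, b3, b4, b5⟩ := seed_bridge w (hoccp i h1 h2) hs hg
    rw [hsucc i h1]
    exact ⟨b1, b2, b3, b4, b5⟩
  have hbars : ∀ i j, 1 ≤ i → i ≤ j → j ≤ m →
      igBar (blockProd p i (j - i)) = cseg w (wcoord p i) (wcoord p (j + 1)) := by
    intro i j h1 h2 h3
    have hocc : OccAt w (blockProd p i (j - i)) (wcoord p i) := by
      apply occAt_block
      intro l hl1 hl2
      have h4 := hoccp l (by omega) (by omega)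
      have h5 : wcoord p i + ∑ x ∈ Finset.Ico i l, wlen (p x) = wcoord p l := by
        unfold wcoord
        have h6 := Finset.sum_Ico_consecutive (fun x => wlen (p x))
          (show 1 ≤ i by omega) (show i ≤ l by omega)
        omega
      rw [h5]
      exact h4
    have h6 := occAt_bar w hocc
    rw [wlen_block, show i + (j - i) + 1 = j + 1 by omega] at h6
    have h7 : wcoord p i + ∑ l ∈ Finset.Ico i (j + 1), wlen (p l) = wcoord p (j + 1) := by
      unfold wcoord
      have h8 := Finset.sum_Ico_consecutive (fun x => wlen (p x))
        (show 1 ≤ i by omega) (show i ≤ j + 1 by omega)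
      omega
    rw [h7] at h6
    exact h6
  refine ⟨⟨m, wcoord p, γ, hm1, ?_, ?_, ?_, ?_, ?_, ?_, ?_, ?_, ?_⟩, rfl, rfl, rfl, ?_⟩
  · unfold wcoord
    simp
  · intro i h1 h2
    rw [hsucc i h1]
    have := wlen_pos (p i)
    omega
  · exact htop
  · exact fun i h1 h2 => (hseeds i h1 h2).1
  · exact fun i h1 h2 => (hseeds i h1 h2).2.1
  · exact fun i h1 h2 => (hseeds i h1 h2).2.2.1
  · exact fun i h1 h2 => (hseeds i h1 h2).2.2.2.1
  · exact fun i h1 h2 => (hseeds i h1 h2).2.2.2.2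
  · intro i i' h1 hlt h2
    have h3 := hmin i i' h1 hlt h2
    rw [hbars i i' h1 (le_of_lt hlt) h2] at h3
    exact h3
  · intro i h1 h2
    have h3 := hbars i i h1 le_rfl h2
    rw [Nat.sub_self] at h3
    exact h3

end Bridge

theorem stmt3 {S : Type*} [Semigroup S] [Finite (IdemE S)]
    (w : FreeSemigroup (IdemE S)) (m s : ℕ)
    (p q : ℕ → FreeSemigroup (IdemE S))
    (hp : IsMinRFact w m p) (hq : IsMinRFact w s q)
    (e f : ℕ → IdemE S) (γ δ : ℕ → ℕ)
    -- a fixed seed `e i` of `p i`, at position `γ i` in `w`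
    (hseedp : ∀ i, 1 ≤ i → i ≤ m →
      ∃ k, SeedAt (p i) (e i) k ∧ γ i = wcoord p i - 1 + k)
    -- a fixed seed `f j` of `q j`, at position `δ j` in `w`
    (hseedq : ∀ j, 1 ≤ j → j ≤ s →
      ∃ k, SeedAt (q j) (f j) k ∧ δ j = wcoord q j - 1 + k)
    -- 1 ≤ γ₁ < α₂ ≤ γ₂ < ⋯ < αₘ ≤ γₘ ≤ |w|
    (hchainp : 1 ≤ γ 1 ∧
      (∀ i, 1 ≤ i → i < m → γ i < wcoord p (i + 1) ∧ wcoord p (i + 1) ≤ γ (i + 1)) ∧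
      γ m ≤ wlen w)
    -- 1 ≤ δ₁ < β₂ ≤ δ₂ < ⋯ < β_s ≤ δ_s ≤ |w|
    (hchainq : 1 ≤ δ 1 ∧
      (∀ j, 1 ≤ j → j < s → δ j < wcoord q (j + 1) ∧ wcoord q (j + 1) ≤ δ (j + 1)) ∧
      δ s ≤ wlen w) :
    m = s ∧
    (∀ i, 1 ≤ i → i ≤ m → GreenD (igBar (p i)) (igBar (q i))) ∧
    -- the interlacing γᵢ, δᵢ < αᵢ₊₁, βᵢ₊₁ ≤ γᵢ₊₁, δᵢ₊₁
    (∀ i, 1 ≤ i → i < m →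
      max (γ i) (δ i) < min (wcoord p (i + 1)) (wcoord q (i + 1)) ∧
      max (wcoord p (i + 1)) (wcoord q (i + 1)) ≤ min (γ (i + 1)) (δ (i + 1))) ∧
    GreenR (igBar (p 1)) (igBar (q 1)) ∧ GreenL (igBar (p m)) (igBar (q m)) := by

  obtain ⟨P, hPm, hPa, hPg, hbarP⟩ := mkFD w hp hseedp
  obtain ⟨Q, hQm, hQa, hQg, hbarQ⟩ := mkFD w hq hseedq
  obtain ⟨hms0, hDD, hII, hRR, hLL⟩ := FD.main P Q (cseg_cmul w)
  rw [hPm, hQm] at hms0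
  have hm1 : 1 ≤ m := hp.1.1
  refine ⟨hms0, ?_, ?_, ?_, ?_⟩
  · intro i h1 h2
    have h3 := hDD i h1 (by rw [hPm]; exact h2)
    rw [hPa, hQa] at h3
    rw [hbarP i h1 h2, hbarQ i h1 (by rw [← hms0]; exact h2)]
    exact h3
  · intro i h1 h2
    have h3 := hII i h1 (by rw [hPm]; exact h2)
    rw [hPa, hQa, hPg, hQg] at h3
    exact h3
  · have h3 := hRR
    rw [hPa, hQa] at h3
    rw [hbarP 1 le_rfl hm1, hbarQ 1 le_rfl (by omega)]
    exact h3
  · have h3 := hLL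
    rw [hPa, hQa, hPm, hQm] at h3
    rw [← hms0] at h3
    rw [hbarP m hm1 le_rfl, hbarQ m (by omega) (le_of_eq hms0)]
    exact h3
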